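/- arXiv:2402.17578 — 5 statements merged into one kernel-verified Lean document; each statement's English description precedes it below -/
import Mathlib

section
/- Let E ⊂ ℝ^{2N} be measurable and ε > 0. If there exist nonzero f, g ∈ L²(ℝᴺ) such that ∫_E |V_g f(x,ξ)|² dx dξ ≥ (1−ε) ‖f‖₂² ‖g‖₂², then the Lebesgue measure of E satisfies m(E) ≥ 1 − ε. -/
open MeasureTheory Complex ENNReal

noncomputable section

abbrev RN (N : ℕ) := Fin N → ℝ

def dotR {N : ℕ} (x y : RN N) : ℝ := ∑ i, x i * y i

def stft {N : ℕ} (g f : RN N → ℂ) (x ξ : RN N) : ℂ :=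
  ∫ y, f y * (starRingEnd ℂ) (g (y - x)) * Complex.exp (-(Complex.I * (dotR y ξ : ℂ)))

def ftr {N : ℕ} (f : RN N → ℂ) (ξ : RN N) : ℂ :=
  ∫ x, Complex.exp (-(Complex.I * (dotR x ξ : ℂ))) * f x

def rihaczek {N : ℕ} (f : RN N → ℂ) (x ξ : RN N) : ℂ :=
  Complex.exp (-(Complex.I * (dotR x ξ : ℂ))) * f x * (starRingEnd ℂ) (ftr f ξ)

def spec {N : ℕ} (g f : RN N → ℂ) (x ξ : RN N) : ℝ := ‖stft g f x ξ‖ ^ 2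

def wig {N : ℕ} (τ : ℝ) (f : RN N → ℂ) (x ξ : RN N) : ℂ :=
  ∫ t, Complex.exp (-(Complex.I * (dotR t ξ : ℂ))) * f (x + τ • t) *
    (starRingEnd ℂ) (f (x - (1 - τ) • t))

structure WeightFunction where
  w : ℝ → ℝ
  K : ℝ
  a : ℝ
  b : ℝ
  oneLeK : 1 ≤ K
  bpos : 0 < b
  cont : Continuous w
  mono : MonotoneOn w (Set.Ici 0)
  nonneg : ∀ t, 0 ≤ w t
  alpha : ∀ t, 0 ≤ t → w (2 * t) ≤ K * (1 + w t)
  beta : Filter.Tendsto (fun t => w t / t) Filter.atTop (nhds 0)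
  gamma : ∀ t, 0 ≤ t → a + b * Real.log (1 + t) ≤ w t
  delta : ConvexOn ℝ Set.univ (fun t => w (Real.exp t))
  subadd : ∀ s t, 0 ≤ s → 0 ≤ t → w (s + t) ≤ K * (1 + w s + w t)

def wnorm (W : WeightFunction) (lam : ℝ) {E : Type*} [NormedAddCommGroup E]
    [MeasurableSpace E] (μ : Measure E) {F : Type*} [NormedAddCommGroup F]
    (f : E → F) (p : ℝ≥0∞) : ℝ≥0∞ :=
  eLpNorm (fun t => Real.exp (lam * W.w ‖t‖) * ‖f t‖) p μ

def SOmega {N : ℕ} (W : WeightFunction) (f : RN N → ℂ) : Prop :=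
  ∀ lam : ℝ, 0 < lam →
    (∃ C, ∀ x, Real.exp (lam * W.w ‖x‖) * ‖f x‖ ≤ C) ∧
    (∃ C, ∀ ξ, Real.exp (lam * W.w ‖ξ‖) * ‖ftr f ξ‖ ≤ C)

def elpN {α : Type*} [MeasurableSpace α] (μ : Measure α) (h : α → ℝ≥0∞) (p : ℝ≥0∞) : ℝ≥0∞ :=
  if p = ∞ then essSup h μ else (∫⁻ z, (h z) ^ p.toReal ∂μ) ^ (1 / p.toReal)

end

lemma eLpNorm_two_eq' {N : ℕ} (f : RN N → ℂ) :
    eLpNorm f 2 volume = (∫⁻ y, (‖f y‖₊ : ℝ≥0∞) ^ (2:ℝ)) ^ (1/2 : ℝ) := by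
  rw [eLpNorm_eq_lintegral_rpow_enorm_toReal (by norm_num) (by norm_num)]
  simp only [enorm_eq_nnnorm]
  norm_num

lemma stft_nnnorm_le {N : ℕ} (f g : RN N → ℂ)
    (hf : AEStronglyMeasurable f volume) (hg : AEStronglyMeasurable g volume)
    (x ξ : RN N) :
    (‖stft g f x ξ‖₊ : ℝ≥0∞) ≤ eLpNorm f 2 volume * eLpNorm g 2 volume := by
  have h1 : (‖stft g f x ξ‖₊ : ℝ≥0∞) ≤
      ∫⁻ y, (‖f y‖₊ : ℝ≥0∞) * (‖g (y - x)‖₊ : ℝ≥0∞) := by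
    refine (enorm_integral_le_lintegral_enorm _).trans_eq ?_
    refine lintegral_congr fun y => ?_
    have hexp : ‖Complex.exp (-(Complex.I * (dotR y ξ : ℂ)))‖ = 1 := by
      rw [Complex.norm_exp]
      simp
    have : ‖f y * (starRingEnd ℂ) (g (y - x)) * Complex.exp (-(Complex.I * (dotR y ξ : ℂ)))‖
        = ‖f y‖ * ‖g (y - x)‖ := by
      rw [norm_mul, norm_mul, hexp, RCLike.norm_conj]
      ring
    rw [enorm_eq_nnnorm, ← ENNReal.coe_mul, ← nnnorm_mul]
    congr 1
    ext
    simpa using this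
  refine h1.trans ?_
  have hconj : Real.HolderConjugate 2 2 := Real.HolderConjugate.two_two
  have hfm : AEMeasurable (fun y => (‖f y‖₊ : ℝ≥0∞)) volume := hf.enorm
  have hgm : AEMeasurable (fun y => (‖g (y - x)‖₊ : ℝ≥0∞)) volume := by
    have hmp : MeasurePreserving (fun y : RN N => y - x) volume volume :=
      measurePreserving_sub_right volume x
    exact (hg.enorm.comp_quasiMeasurePreserving hmp.quasiMeasurePreserving)
  have hCS := ENNReal.lintegral_mul_le_Lp_mul_Lq volume hconj hfm hgm
  refine hCS.trans_eq ?_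
  rw [eLpNorm_two_eq', eLpNorm_two_eq']
  congr 1
  rw [← lintegral_sub_right_eq_self (fun y => (‖g y‖₊ : ℝ≥0∞) ^ (2:ℝ)) x]


theorem stmt1 {N : ℕ} (E : Set (RN N × RN N)) (hE : MeasurableSet E)
    (ε : ℝ) (hε : 0 < ε) (f g : RN N → ℂ)
    (hf : MeasureTheory.MemLp f 2 MeasureTheory.volume)
    (hg : MeasureTheory.MemLp g 2 MeasureTheory.volume)
    (hf0 : MeasureTheory.eLpNorm f 2 MeasureTheory.volume ≠ 0)
    (hg0 : MeasureTheory.eLpNorm g 2 MeasureTheory.volume ≠ 0)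
    (h : (1 - ε) * (MeasureTheory.eLpNorm f 2 MeasureTheory.volume).toReal ^ 2 *
        (MeasureTheory.eLpNorm g 2 MeasureTheory.volume).toReal ^ 2 ≤
      ∫ z in E, ‖stft g f z.1 z.2‖ ^ 2) :
    ENNReal.ofReal (1 - ε) ≤ MeasureTheory.volume E := by

  set A := (MeasureTheory.eLpNorm f 2 MeasureTheory.volume).toReal with hA
  set B := (MeasureTheory.eLpNorm g 2 MeasureTheory.volume).toReal with hB
  have hApos : 0 < A := ENNReal.toReal_pos hf0 hf.eLpNorm_ne_top
  have hBpos : 0 < B := ENNReal.toReal_pos hg0 hg.eLpNorm_ne_top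
  by_cases hε1 : 1 ≤ ε
  · simp [ENNReal.ofReal_eq_zero.2 (by linarith : 1 - ε ≤ 0)]
  push_neg at hε1
  have h1ε : 0 < 1 - ε := by linarith
  by_cases hEtop : MeasureTheory.volume E = ∞
  · simp [hEtop]
  -- pointwise bound
  have hpt : ∀ z : RN N × RN N, ‖stft g f z.1 z.2‖ ^ 2 ≤ (A * B) ^ 2 := by
    intro z
    have hb := stft_nnnorm_le f g hf.aestronglyMeasurable hg.aestronglyMeasurable z.1 z.2
    have hfin : eLpNorm f 2 volume * eLpNorm g 2 volume ≠ ∞ :=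
      ENNReal.mul_ne_top hf.eLpNorm_ne_top hg.eLpNorm_ne_top
    have : ‖stft g f z.1 z.2‖ ≤ A * B := by
      have := ENNReal.toReal_mono hfin hb
      rwa [ENNReal.toReal_mul, ENNReal.coe_toReal, coe_nnnorm] at this
    exact pow_le_pow_left₀ (norm_nonneg _) this 2
  by_cases hInt : MeasureTheory.Integrable (fun z : RN N × RN N => ‖stft g f z.1 z.2‖ ^ 2)
      (MeasureTheory.volume.restrict E)
  · -- integrable case
    haveI : MeasureTheory.IsFiniteMeasure (MeasureTheory.volume.restrict E) := by
      constructor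
      rw [MeasureTheory.Measure.restrict_apply_univ]
      exact Ne.lt_top hEtop
    have hconst : MeasureTheory.Integrable (fun _ : RN N × RN N => (A * B) ^ 2)
        (MeasureTheory.volume.restrict E) := MeasureTheory.integrable_const _
    have hmono : (∫ z in E, ‖stft g f z.1 z.2‖ ^ 2) ≤ ∫ _z in E, (A * B) ^ 2 :=
      MeasureTheory.integral_mono hInt hconst fun z => hpt z
    rw [MeasureTheory.integral_const, measureReal_restrict_apply_univ, smul_eq_mul]
      at hmono
    have hkey : (1 - ε) * A ^ 2 * B ^ 2 ≤ (MeasureTheory.volume E).toReal * (A * B) ^ 2 :=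
      le_trans h hmono
    have hAB : 0 < (A * B) ^ 2 := by positivity
    have h2 : 1 - ε ≤ (MeasureTheory.volume E).toReal := by
      have : (1 - ε) * (A * B) ^ 2 ≤ (MeasureTheory.volume E).toReal * (A * B) ^ 2 := by
        calc (1 - ε) * (A * B) ^ 2 = (1 - ε) * A ^ 2 * B ^ 2 := by ring
        _ ≤ _ := hkey
      exact le_of_mul_le_mul_right this hAB
    calc ENNReal.ofReal (1 - ε) ≤ ENNReal.ofReal (MeasureTheory.volume E).toReal :=
          ENNReal.ofReal_le_ofReal h2
      _ = MeasureTheory.volume E := ENNReal.ofReal_toReal hEtop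
  · -- non-integrable: integral is 0, contradiction
    rw [MeasureTheory.integral_undef hInt] at h
    have : (0:ℝ) < (1 - ε) * A ^ 2 * B ^ 2 := by positivity
    linarith
end

section
/- Let ω be a weight function with constant K from condition (α) (so ω(t₁+t₂) ≤ K(1+ω(t₁)+ω(t₂))). Then for every μ ≥ 0, 1 ≤ p ≤ ∞, and Schwartz f, g, one has sup_{x,ξ} e^{μω(x)} |V_g f(x,ξ)| ≤ e^{Kμ} ‖e^{Kμω} f‖_p ‖e^{Kμω} g‖_{p'}, where p' is the conjugate exponent of p. -/
open MeasureTheory Complex ENNReal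

set_option maxHeartbeats 1000000 in
theorem stmt3 {N : ℕ} (W : WeightFunction) (μ : ℝ) (hμ : 0 ≤ μ)
    (p q : ℝ≥0∞) (hp : 1 ≤ p) (hpq : 1 / p + 1 / q = 1)
    (f g : SchwartzMap (RN N) ℂ) (x ξ : RN N) :
    ENNReal.ofReal (Real.exp (μ * W.w ‖x‖) * ‖stft ⇑g ⇑f x ξ‖) ≤
      ENNReal.ofReal (Real.exp (W.K * μ)) *
      wnorm W (W.K * μ) MeasureTheory.volume ⇑f p *
      wnorm W (W.K * μ) MeasureTheory.volume ⇑g q := by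
  set F : RN N → ℝ := fun y => Real.exp (W.K * μ * W.w ‖y‖) * ‖f y‖ with hF
  set G : RN N → ℝ := fun y => Real.exp (W.K * μ * W.w ‖y‖) * ‖g y‖ with hG
  have hFcont : Continuous F := by
    exact ((Real.continuous_exp.comp ((continuous_const.mul
      (W.cont.comp continuous_norm)))).mul f.continuous.norm)
  have hGcont : Continuous G := by
    exact ((Real.continuous_exp.comp ((continuous_const.mul
      (W.cont.comp continuous_norm)))).mul g.continuous.norm)
  set Gx : RN N → ℝ := fun y => G (y - x) with hGx
  have hGxcont : Continuous Gx := hGcont.comp (continuous_id.sub continuous_const)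
  -- pointwise bound
  have key : ∀ y : RN N, Real.exp (μ * W.w ‖x‖) * (‖f y‖ * ‖g (y - x)‖) ≤
      Real.exp (W.K * μ) * (Gx y * F y) := by
    intro y
    have h1 : ‖x‖ ≤ ‖y‖ + ‖y - x‖ := by
      have := norm_sub_le y (y - x)
      simpa [sub_sub_cancel] using this
    have h2 : W.w ‖x‖ ≤ W.K * (1 + W.w ‖y‖ + W.w ‖y - x‖) := by
      refine le_trans ?_ (W.subadd _ _ (norm_nonneg _) (norm_nonneg _))
      exact W.mono (Set.mem_Ici.2 (norm_nonneg _)) (Set.mem_Ici.2 (by positivity)) h1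
    have h3 : μ * W.w ‖x‖ ≤ W.K * μ + (W.K * μ * W.w ‖y‖ + W.K * μ * W.w ‖y - x‖) := by
      nlinarith [mul_le_mul_of_nonneg_left h2 hμ]
    have h4 : Real.exp (μ * W.w ‖x‖) ≤
        Real.exp (W.K * μ) * (Real.exp (W.K * μ * W.w ‖y - x‖) * Real.exp (W.K * μ * W.w ‖y‖)) := by
      rw [← Real.exp_add, ← Real.exp_add]
      exact Real.exp_le_exp.2 (by linarith)
    have h5 : (0:ℝ) ≤ ‖f y‖ * ‖g (y - x)‖ := by positivity
    calc Real.exp (μ * W.w ‖x‖) * (‖f y‖ * ‖g (y - x)‖)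
        ≤ (Real.exp (W.K * μ) * (Real.exp (W.K * μ * W.w ‖y - x‖) * Real.exp (W.K * μ * W.w ‖y‖)))
            * (‖f y‖ * ‖g (y - x)‖) := mul_le_mul_of_nonneg_right h4 h5
      _ = Real.exp (W.K * μ) * (Gx y * F y) := by simp only [hF, hGx, hG]; ring
  -- step 1: bound by lintegral
  have hnorm : ∀ y : RN N,
      ‖f y * (starRingEnd ℂ) (g (y - x)) * Complex.exp (-(Complex.I * (dotR y ξ : ℂ)))‖
        = ‖f y‖ * ‖g (y - x)‖ := by
    intro y
    simp [Complex.norm_exp]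
  have step1 : ENNReal.ofReal (Real.exp (μ * W.w ‖x‖) * ‖stft ⇑g ⇑f x ξ‖) ≤
      ENNReal.ofReal (Real.exp (W.K * μ)) * eLpNorm (Gx • F) 1 volume := by
    rw [ENNReal.ofReal_mul (Real.exp_nonneg _), ofReal_norm]
    calc ENNReal.ofReal (Real.exp (μ * W.w ‖x‖)) * (‖stft ⇑g ⇑f x ξ‖₊ : ℝ≥0∞)
        ≤ ENNReal.ofReal (Real.exp (μ * W.w ‖x‖)) *
          ∫⁻ y, ‖f y * (starRingEnd ℂ) (g (y - x)) *
            Complex.exp (-(Complex.I * (dotR y ξ : ℂ)))‖₊ ∂volume := by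
          gcongr
          exact enorm_integral_le_lintegral_enorm _
      _ = ∫⁻ y, ENNReal.ofReal (Real.exp (μ * W.w ‖x‖)) *
            ‖f y * (starRingEnd ℂ) (g (y - x)) *
            Complex.exp (-(Complex.I * (dotR y ξ : ℂ)))‖₊ ∂volume := by
          rw [lintegral_const_mul' _ _ ENNReal.ofReal_ne_top]
      _ ≤ ∫⁻ y, ENNReal.ofReal (Real.exp (W.K * μ)) * ‖(Gx • F) y‖₊ ∂volume := by
          refine lintegral_mono fun y => ?_
          rw [← enorm_eq_nnnorm, ← enorm_eq_nnnorm, ← ofReal_norm, ← ofReal_norm,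
            ← ENNReal.ofReal_mul (Real.exp_nonneg _), ← ENNReal.ofReal_mul (Real.exp_nonneg _)]
          refine ENNReal.ofReal_le_ofReal ?_
          rw [hnorm]
          refine (key y).trans ?_
          have : ‖(Gx • F) y‖ = |Gx y * F y| := by simp [Pi.smul_apply', smul_eq_mul, Real.norm_eq_abs, abs_mul]
          rw [this]
          gcongr
          exact le_abs_self _
      _ = ENNReal.ofReal (Real.exp (W.K * μ)) * eLpNorm (Gx • F) 1 volume := by
          rw [lintegral_const_mul' _ _ ENNReal.ofReal_ne_top, eLpNorm_one_eq_lintegral_enorm]; rfl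
  refine step1.trans ?_
  unfold wnorm
  rw [← hF, ← hG]
  rw [mul_assoc]
  gcongr
  -- step 2: Hölder
  have holder : eLpNorm (Gx • F) 1 volume ≤ eLpNorm Gx q volume * eLpNorm F p volume := by
    refine eLpNorm_smul_le_mul_eLpNorm hFcont.aestronglyMeasurable
      hGxcont.aestronglyMeasurable (hpqr := ⟨?_⟩)
    simpa [one_div, add_comm] using hpq
  refine holder.trans ?_
  rw [mul_comm]
  have hGxnorm : eLpNorm (G ∘ (fun y => y - x)) q volume = eLpNorm G q volume :=
    eLpNorm_comp_measurePreserving hGcont.aestronglyMeasurable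
      (measurePreserving_sub_right volume x)
  have hc : Gx = G ∘ (fun y => y - x) := rfl
  rw [hc, hGxnorm]
end

section
/- Let ω be a weight function with constant K from condition (α), and let g ∈ 𝒮_ω(ℝᴺ), g ≠ 0. Then for every λ ≥ 0, 1 ≤ p ≤ ∞, and f ∈ 𝒮_ω(ℝᴺ): ‖e^{λω} Sp_g f‖_∞ ≤ (2π)^{−N} e^{K(1+2K)λ} ‖e^{2K²λω} Rf‖_p ‖e^{2K²λω} Rg‖_{p'}. -/
open MeasureTheory Complex ENNReal

/-! ### Auxiliary machinery -/

noncomputable section Aux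

open FourierTransform

variable {N : ℕ}

abbrev EN (N : ℕ) := EuclideanSpace ℝ (Fin N)
abbrev mEq (N : ℕ) : EN N ≃ᵐ RN N := (MeasurableEquiv.toLp 2 (Fin N → ℝ)).symm
def toE {N : ℕ} (v : RN N) : EN N := (WithLp.equiv 2 (Fin N → ℝ)).symm v
def FS (f : SchwartzMap (RN N) ℂ) : SchwartzMap (EN N) ℂ :=
  SchwartzMap.compCLMOfContinuousLinearEquiv ℝ (EuclideanSpace.equiv (Fin N) ℝ) f

lemma dotR_comm (x y : RN N) : dotR x y = dotR y x := by
  simp [dotR, mul_comm]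

lemma dotR_cont : Continuous (fun p : RN N × RN N => dotR p.1 p.2) := by
  refine continuous_finset_sum _ fun i _ => ?_
  exact ((continuous_apply i).comp continuous_fst).mul ((continuous_apply i).comp continuous_snd)

lemma dotR_add_left (x y z : RN N) : dotR (x + y) z = dotR x z + dotR y z := by
  simp [dotR, add_mul, Finset.sum_add_distrib]

lemma dotR_sub_right (x y z : RN N) : dotR x (y - z) = dotR x y - dotR x z := by
  simp [dotR, mul_sub, Finset.sum_sub_distrib]

lemma dotR_sub_sub (u x η ξ : RN N) :
    dotR (u - x) (η - ξ) = dotR u η - dotR u ξ - dotR x η + dotR x ξ := by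
  have h : ∀ i, (u i - x i) * (η i - ξ i)
      = u i * η i - u i * ξ i - x i * η i + x i * ξ i := fun i => by ring
  simp only [dotR, Pi.sub_apply, h]
  rw [Finset.sum_add_distrib, Finset.sum_sub_distrib, Finset.sum_sub_distrib]

lemma transfer (φ : RN N → ℂ) : ∫ y, φ y = ∫ x : EN N, φ (mEq N x) :=
  ((EuclideanSpace.volume_preserving_symm_measurableEquiv_toLp (Fin N)).integral_comp
    (MeasurableEquiv.measurableEmbedding _) φ).symm

lemma inner_toE (x : EN N) (v : RN N) : (inner ℝ x (toE v) : ℝ) = dotR (mEq N x) v := by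
  simp [PiLp.inner_apply, dotR, toE, mul_comm]

lemma toE_mEq (x : EN N) : toE (mEq N x) = x := rfl
lemma FS_apply (f : SchwartzMap (RN N) ℂ) (x : EN N) : (FS f) x = f (mEq N x) := rfl

lemma ftr_eq (f : SchwartzMap (RN N) ℂ) (ζ : RN N) :
    ftr ⇑f ζ = 𝓕 (⇑(FS f)) ((2 * Real.pi)⁻¹ • toE ζ) := by
  rw [Real.fourier_eq']
  rw [show ftr ⇑f ζ = ∫ x : EN N, Complex.exp (-(Complex.I * (dotR (mEq N x) ζ : ℂ)))
      * f (mEq N x) from transfer _]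
  congr 1; ext v
  rw [smul_eq_mul, ← FS_apply, real_inner_smul_right, inner_toE]
  congr 2
  have hπ : (Real.pi : ℂ) ≠ 0 := by exact_mod_cast Real.pi_ne_zero
  push_cast
  field_simp

lemma ftr_comp_mEq (f : SchwartzMap (RN N) ℂ) (x : EN N) :
    ftr ⇑f (mEq N x) = 𝓕 (⇑(FS f)) ((2 * Real.pi)⁻¹ • x) := by
  rw [ftr_eq, toE_mEq]

lemma ftr_integrable (f : SchwartzMap (RN N) ℂ) : Integrable (ftr ⇑f) volume := by
  rw [← MeasurePreserving.integrable_comp_emb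
    (EuclideanSpace.volume_preserving_symm_measurableEquiv_toLp (Fin N))
    (MeasurableEquiv.measurableEmbedding _)]
  have : (ftr ⇑f) ∘ (mEq N) = fun x : EN N => 𝓕 (⇑(FS f)) ((2 * Real.pi)⁻¹ • x) := by
    ext x; exact ftr_comp_mEq f x
  rw [this]
  refine (integrable_comp_smul_iff volume (𝓕 ⇑(FS f))
    (by positivity : ((2 * Real.pi)⁻¹ : ℝ) ≠ 0)).2 ?_
  exact (SchwartzMap.fourierTransformCLM ℝ (FS f)).integrable

lemma ftr_continuous (f : SchwartzMap (RN N) ℂ) : Continuous (ftr ⇑f) := by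
  have : ftr ⇑f = fun ζ => 𝓕 (⇑(FS f)) ((2 * Real.pi)⁻¹ • toE ζ) := funext (ftr_eq f)
  rw [this]
  exact (SchwartzMap.fourierTransformCLM ℝ (FS f)).continuous.comp
    ((continuous_const_smul _).comp (EuclideanSpace.equiv (Fin N) ℝ).symm.continuous)

lemma inv_lemma (f : SchwartzMap (RN N) ℂ) (v : RN N) :
    ∫ η, ftr ⇑f η * Complex.exp (Complex.I * (dotR v η : ℂ))
      = (((2 * Real.pi) ^ N : ℝ) : ℂ) * f v := by
  rw [show (∫ η, ftr ⇑f η * Complex.exp (Complex.I * (dotR v η : ℂ)))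
      = ∫ x : EN N, ftr ⇑f (mEq N x) * Complex.exp (Complex.I * (dotR v (mEq N x) : ℂ))
      from transfer _]
  have key : ∀ x : EN N, ftr ⇑f (mEq N x) * Complex.exp (Complex.I * (dotR v (mEq N x) : ℂ))
      = (fun u : EN N => 𝓕 (⇑(FS f)) u *
          Complex.exp ((((2 * Real.pi) * (inner ℝ u (toE v) : ℝ) : ℝ) : ℂ) * Complex.I))
        ((2 * Real.pi)⁻¹ • x) := by
    intro x
    rw [ftr_comp_mEq]
    congr 2
    rw [real_inner_smul_left, inner_toE, dotR_comm]
    have hπ : (Real.pi : ℂ) ≠ 0 := by exact_mod_cast Real.pi_ne_zero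
    push_cast
    field_simp
  simp_rw [key]
  rw [MeasureTheory.Measure.integral_comp_smul volume
    (fun u : EN N => 𝓕 (⇑(FS f)) u *
      Complex.exp ((((2 * Real.pi) * (inner ℝ u (toE v) : ℝ) : ℝ) : ℂ) * Complex.I))
    ((2 * Real.pi)⁻¹)]
  have hrank : Module.finrank ℝ (EN N) = N := finrank_euclideanSpace_fin
  rw [hrank]
  have habs : |(((2 * Real.pi)⁻¹ : ℝ) ^ N)⁻¹| = (2 * Real.pi) ^ N := by
    rw [abs_of_pos (by positivity), ← inv_pow, inv_inv]
  rw [habs]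
  have : (∫ u : EN N, 𝓕 (⇑(FS f)) u *
      Complex.exp ((((2 * Real.pi) * (inner ℝ u (toE v) : ℝ) : ℝ) : ℂ) * Complex.I))
      = 𝓕⁻ (𝓕 ⇑(FS f)) (toE v) := by
    rw [Real.fourierInv_eq']
    congr 1; ext u
    rw [smul_eq_mul, mul_comm (𝓕 (⇑(FS f)) u)]
  rw [this, Continuous.fourierInv_fourier_eq (FS f).continuous (FS f).integrable
    ((SchwartzMap.fourierTransformCLM ℝ (FS f)).integrable)]
  rw [show (FS f) (toE v) = f v from rfl, real_smul]

lemma conj_exp_neg (r : ℝ) :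
    (starRingEnd ℂ) (Complex.exp (-(Complex.I * (r : ℂ)))) =
      Complex.exp (Complex.I * (r : ℂ)) := by
  rw [← Complex.exp_conj]
  simp

lemma inv_conj (f : SchwartzMap (RN N) ℂ) (u : RN N) :
    ∫ η, (starRingEnd ℂ) (ftr ⇑f η) * Complex.exp (-(Complex.I * (dotR u η : ℂ)))
      = (((2 * Real.pi) ^ N : ℝ) : ℂ) * (starRingEnd ℂ) (f u) := by
  have : ∀ η : RN N, (starRingEnd ℂ) (ftr ⇑f η) * Complex.exp (-(Complex.I * (dotR u η : ℂ)))
      = (starRingEnd ℂ) (ftr ⇑f η * Complex.exp (Complex.I * (dotR u η : ℂ))) := by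
    intro η
    rw [map_mul]
    congr 1
    rw [← Complex.exp_conj]
    simp
  simp_rw [this]
  rw [integral_conj, inv_lemma, map_mul, Complex.conj_ofReal]

lemma rihaczek_continuous (f : SchwartzMap (RN N) ℂ) :
    Continuous (fun z : RN N × RN N => rihaczek ⇑f z.1 z.2) := by
  unfold rihaczek
  refine ((Complex.continuous_exp.comp ?_).mul (f.continuous.comp continuous_fst)).mul
    (continuous_star.comp ((ftr_continuous f).comp continuous_snd))
  exact (continuous_const.mul (Complex.continuous_ofReal.comp dotR_cont)).neg

end Aux

section MainProof

variable {N : ℕ}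

lemma norm_exp_I_mul (r : ℝ) : ‖Complex.exp (Complex.I * (r : ℂ))‖ = 1 := by
  simp [Complex.norm_exp]

lemma norm_exp_neg_I_mul (r : ℝ) : ‖Complex.exp (-(Complex.I * (r : ℂ)))‖ = 1 := by
  simp [Complex.norm_exp]

/-- Fubini-swap integrability for the `B₀` computation. -/
lemma swap_integrable (f g : SchwartzMap (RN N) ℂ) (x ξ : RN N) :
    Integrable (Function.uncurry fun (η v : RN N) =>
      (starRingEnd ℂ) (ftr ⇑f η) * Complex.exp (-(Complex.I * (dotR x η : ℂ))) *
        (Complex.exp (-(Complex.I * (dotR v (η - ξ) : ℂ))) * g v))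
      (volume.prod volume) := by
  have hbound : Integrable (fun z : RN N × RN N => ‖ftr ⇑f z.1‖ * ‖g z.2‖)
      (volume.prod volume) :=
    (ftr_integrable f).norm.mul_prod (g.integrable.norm)
  refine hbound.mono' ?_ ?_
  · apply Continuous.aestronglyMeasurable
    refine (((continuous_star.comp ((ftr_continuous f).comp continuous_fst)).mul
      (Complex.continuous_exp.comp ?_)).mul ((Complex.continuous_exp.comp ?_).mul
        (g.continuous.comp continuous_snd)))
    · exact (continuous_const.mul (Complex.continuous_ofReal.comp
        ((dotR_cont).comp (Continuous.prodMk continuous_const continuous_fst)))).neg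
    · exact (continuous_const.mul (Complex.continuous_ofReal.comp
        ((dotR_cont).comp (Continuous.prodMk continuous_snd
          ((continuous_fst).sub continuous_const))))).neg
  · refine Filter.Eventually.of_forall fun z => ?_
    simp only [Function.uncurry]
    rw [norm_mul, norm_mul, norm_mul, norm_exp_neg_I_mul, norm_exp_neg_I_mul]
    simp [RCLike.norm_conj]

lemma B0_eq (f g : SchwartzMap (RN N) ℂ) (x ξ : RN N) :
    (∫ η, (starRingEnd ℂ) (ftr ⇑f η) * ftr ⇑g (η - ξ) *
        Complex.exp (-(Complex.I * (dotR x η : ℂ))))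
      = (((2 * Real.pi) ^ N : ℝ) : ℂ) *
        (starRingEnd ℂ) (Complex.exp (Complex.I * (dotR x ξ : ℂ)) * stft ⇑g ⇑f x ξ) := by
  have h1 : ∀ η : RN N, (starRingEnd ℂ) (ftr ⇑f η) * ftr ⇑g (η - ξ) *
      Complex.exp (-(Complex.I * (dotR x η : ℂ)))
      = ∫ v, (starRingEnd ℂ) (ftr ⇑f η) * Complex.exp (-(Complex.I * (dotR x η : ℂ))) *
          (Complex.exp (-(Complex.I * (dotR v (η - ξ) : ℂ))) * g v) := by
    intro η
    have hftr : ftr ⇑g (η - ξ)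
        = ∫ v, Complex.exp (-(Complex.I * (dotR v (η - ξ) : ℂ))) * g v := rfl
    rw [show (starRingEnd ℂ) (ftr ⇑f η) * ftr ⇑g (η - ξ) *
        Complex.exp (-(Complex.I * (dotR x η : ℂ)))
        = (starRingEnd ℂ) (ftr ⇑f η) * Complex.exp (-(Complex.I * (dotR x η : ℂ))) *
          ftr ⇑g (η - ξ) from by ring]
    rw [hftr, ← integral_const_mul]
  simp_rw [h1]
  rw [MeasureTheory.integral_integral_swap (swap_integrable f g x ξ)]
  have h2 : ∀ v : RN N, (∫ η, (starRingEnd ℂ) (ftr ⇑f η) *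
        Complex.exp (-(Complex.I * (dotR x η : ℂ))) *
        (Complex.exp (-(Complex.I * (dotR v (η - ξ) : ℂ))) * g v))
      = (((2 * Real.pi) ^ N : ℝ) : ℂ) * (starRingEnd ℂ) (f (x + v)) *
          (Complex.exp (Complex.I * (dotR v ξ : ℂ)) * g v) := by
    intro v
    have hpt : ∀ η : RN N, (starRingEnd ℂ) (ftr ⇑f η) *
        Complex.exp (-(Complex.I * (dotR x η : ℂ))) *
        (Complex.exp (-(Complex.I * (dotR v (η - ξ) : ℂ))) * g v)
        = ((starRingEnd ℂ) (ftr ⇑f η) *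
            Complex.exp (-(Complex.I * (dotR (x + v) η : ℂ)))) *
          (Complex.exp (Complex.I * (dotR v ξ : ℂ)) * g v) := by
      intro η
      have hexp : Complex.exp (-(Complex.I * (dotR x η : ℂ))) *
          Complex.exp (-(Complex.I * (dotR v (η - ξ) : ℂ)))
          = Complex.exp (-(Complex.I * (dotR (x + v) η : ℂ))) *
            Complex.exp (Complex.I * (dotR v ξ : ℂ)) := by
        rw [← Complex.exp_add, ← Complex.exp_add]
        congr 1
        rw [dotR_sub_right, dotR_add_left]
        push_cast
        ring
      linear_combination ((starRingEnd ℂ) (ftr ⇑f η) * g v) * hexp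
    simp_rw [hpt]
    rw [integral_mul_const, inv_conj]
  simp_rw [h2]
  have h3 : ∀ v : RN N, (((2 * Real.pi) ^ N : ℝ) : ℂ) * (starRingEnd ℂ) (f (x + v)) *
      (Complex.exp (Complex.I * (dotR v ξ : ℂ)) * g v)
      = (((2 * Real.pi) ^ N : ℝ) : ℂ) * (starRingEnd ℂ)
          (f (x + v) * (starRingEnd ℂ) (g v) * Complex.exp (-(Complex.I * (dotR v ξ : ℂ)))) := by
    intro v
    rw [map_mul, map_mul, conj_exp_neg, Complex.conj_conj]
    ring
  simp_rw [h3]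
  rw [integral_const_mul, integral_conj]
  congr 1
  have h5 : (∫ v, f (x + v) * (starRingEnd ℂ) (g v) *
      Complex.exp (-(Complex.I * (dotR v ξ : ℂ))))
      = Complex.exp (Complex.I * (dotR x ξ : ℂ)) * stft ⇑g ⇑f x ξ := by
    rw [stft, ← MeasureTheory.integral_add_right_eq_self
      (fun y => ⇑f y * (starRingEnd ℂ) (g (y - x)) *
        Complex.exp (-(Complex.I * (dotR y ξ : ℂ)))) x, ← integral_const_mul]
    congr 1; ext v
    simp only [add_sub_cancel_right]
    have hexp : Complex.exp (-(Complex.I * (dotR v ξ : ℂ)))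
        = Complex.exp (Complex.I * (dotR x ξ : ℂ)) *
          Complex.exp (-(Complex.I * (dotR (v + x) ξ : ℂ))) := by
      rw [← Complex.exp_add]
      congr 1
      rw [dotR_add_left]
      push_cast
      ring
    rw [show x + v = v + x from add_comm x v]
    linear_combination (⇑f (v + x) * (starRingEnd ℂ) (g v)) * hexp
  rw [h5]

/-- The magic identity, in inequality form at the `ℝ≥0∞` level. -/
lemma magic (f g : SchwartzMap (RN N) ℂ) (x ξ : RN N) :
    ((2 * Real.pi) ^ N * spec ⇑g ⇑f x ξ : ℝ)
      = ‖∫ w : RN N × RN N, rihaczek ⇑f w.1 w.2 *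
          (starRingEnd ℂ) (rihaczek ⇑g (w.1 - x) (w.2 - ξ))‖ := by
  have hsplit : ∀ w : RN N × RN N, rihaczek ⇑f w.1 w.2 *
      (starRingEnd ℂ) (rihaczek ⇑g (w.1 - x) (w.2 - ξ))
      = (⇑f w.1 * (starRingEnd ℂ) (g (w.1 - x)) *
          Complex.exp (-(Complex.I * (dotR w.1 ξ : ℂ))))
        * ((starRingEnd ℂ) (ftr ⇑f w.2) * ftr ⇑g (w.2 - ξ) *
            Complex.exp (-(Complex.I * (dotR x w.2 : ℂ))) *
            Complex.exp (Complex.I * (dotR x ξ : ℂ))) := by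
    rintro ⟨u, η⟩
    simp only [rihaczek, map_mul, Complex.conj_conj, conj_exp_neg]
    have hexp : Complex.exp (-(Complex.I * (dotR u η : ℂ))) *
        Complex.exp (Complex.I * (dotR (u - x) (η - ξ) : ℂ))
        = Complex.exp (-(Complex.I * (dotR u ξ : ℂ))) *
          (Complex.exp (-(Complex.I * (dotR x η : ℂ))) *
            Complex.exp (Complex.I * (dotR x ξ : ℂ))) := by
      rw [← Complex.exp_add, ← Complex.exp_add, ← Complex.exp_add]
      congr 1
      rw [dotR_sub_sub]
      push_cast
      ring
    linear_combination (⇑f u * (starRingEnd ℂ) (g (u - x)) * (starRingEnd ℂ) (ftr ⇑f η) *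
      ftr ⇑g (η - ξ)) * hexp
  have key : (∫ w : RN N × RN N, rihaczek ⇑f w.1 w.2 *
      (starRingEnd ℂ) (rihaczek ⇑g (w.1 - x) (w.2 - ξ)))
      = (∫ u, ⇑f u * (starRingEnd ℂ) (g (u - x)) *
          Complex.exp (-(Complex.I * (dotR u ξ : ℂ))))
        * (∫ η, (starRingEnd ℂ) (ftr ⇑f η) * ftr ⇑g (η - ξ) *
            Complex.exp (-(Complex.I * (dotR x η : ℂ))) *
            Complex.exp (Complex.I * (dotR x ξ : ℂ))) := by
    rw [MeasureTheory.Measure.volume_eq_prod]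
    simp_rw [hsplit]
    exact MeasureTheory.integral_prod_mul (L := ℂ) (μ := (volume : Measure (RN N)))
      (ν := (volume : Measure (RN N)))
      (fun u => ⇑f u * (starRingEnd ℂ) (g (u - x)) *
        Complex.exp (-(Complex.I * (dotR u ξ : ℂ))))
      (fun η => (starRingEnd ℂ) (ftr ⇑f η) * ftr ⇑g (η - ξ) *
        Complex.exp (-(Complex.I * (dotR x η : ℂ))) *
        Complex.exp (Complex.I * (dotR x ξ : ℂ)))
  rw [key]
  have hA : (∫ u, ⇑f u * (starRingEnd ℂ) (g (u - x)) *
      Complex.exp (-(Complex.I * (dotR u ξ : ℂ)))) = stft ⇑g ⇑f x ξ := rfl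
  have hB : (∫ η, (starRingEnd ℂ) (ftr ⇑f η) * ftr ⇑g (η - ξ) *
      Complex.exp (-(Complex.I * (dotR x η : ℂ))) *
      Complex.exp (Complex.I * (dotR x ξ : ℂ)))
      = ((((2 * Real.pi) ^ N : ℝ) : ℂ) *
        (starRingEnd ℂ) (Complex.exp (Complex.I * (dotR x ξ : ℂ)) * stft ⇑g ⇑f x ξ)) *
        Complex.exp (Complex.I * (dotR x ξ : ℂ)) := by
    rw [← B0_eq f g x ξ, ← integral_mul_const]
  rw [hA, hB]
  simp only [norm_mul, norm_exp_I_mul, RCLike.norm_conj, mul_one, one_mul,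
    Complex.norm_real, Real.norm_eq_abs]
  rw [abs_of_pos (by positivity : (0:ℝ) < (2 * Real.pi) ^ N), spec]
  ring

end MainProof

lemma weight_key (W : WeightFunction) {lam : ℝ} (hlam : 0 ≤ lam) {G : Type*}
    [NormedAddCommGroup G] (z w : G) :
    Real.exp (lam * W.w ‖z‖) ≤ Real.exp (W.K * (1 + 2 * W.K) * lam) *
      (Real.exp (2 * W.K ^ 2 * lam * W.w ‖w‖) *
        Real.exp (2 * W.K ^ 2 * lam * W.w ‖w - z‖)) := by
  rw [← Real.exp_add, ← Real.exp_add, Real.exp_le_exp]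
  have hz : ‖z‖ ≤ ‖w‖ + ‖w - z‖ := by
    calc ‖z‖ = ‖w - (w - z)‖ := by congr 1; abel
      _ ≤ ‖w‖ + ‖w - z‖ := norm_sub_le _ _
  have h1 : W.w ‖z‖ ≤ W.w (‖w‖ + ‖w - z‖) := by
    refine W.mono (Set.mem_Ici.2 (norm_nonneg z)) (Set.mem_Ici.2 ?_) hz
    positivity
  have h2 : W.w (‖w‖ + ‖w - z‖) ≤ W.K * (1 + W.w ‖w‖ + W.w ‖w - z‖) :=
    W.subadd _ _ (norm_nonneg _) (norm_nonneg _)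
  have h3 : W.w ‖z‖ ≤ W.K * (1 + W.w ‖w‖ + W.w ‖w - z‖) := h1.trans h2
  have h4 : lam * W.w ‖z‖ ≤ lam * (W.K * (1 + W.w ‖w‖ + W.w ‖w - z‖)) :=
    mul_le_mul_of_nonneg_left h3 hlam
  have hK := W.oneLeK
  have hA := W.nonneg ‖w‖
  have hB := W.nonneg ‖w - z‖
  nlinarith [mul_nonneg hlam hA, mul_nonneg hlam hB, mul_nonneg hlam (W.nonneg ‖z‖),
    mul_nonneg (mul_nonneg hlam hA) (sub_nonneg.2 hK), mul_nonneg (mul_nonneg hlam hB)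
    (sub_nonneg.2 hK), mul_nonneg hlam (sub_nonneg.2 hK)]


lemma holder_shift {G : Type*} [NormedAddCommGroup G] [MeasurableSpace G] [BorelSpace G]
    {μ : Measure G} [μ.IsAddRightInvariant] [SFinite μ]
    (h1 h2 : G → ℝ) (h1m : AEStronglyMeasurable h1 μ) (h2m : AEStronglyMeasurable h2 μ)
    (z : G) (p q : ℝ≥0∞) (hpq : 1 / p + 1 / q = 1)
    (h2z : AEStronglyMeasurable (fun w => h2 (w - z)) μ) :
    (∫⁻ w, (‖h1 w‖₊ : ℝ≥0∞) * (‖h2 (w - z)‖₊ : ℝ≥0∞) ∂μ)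
      ≤ eLpNorm h1 p μ * eLpNorm h2 q μ := by
  have hmp : MeasurePreserving (fun w : G => w - z) μ μ :=
    measurePreserving_sub_right μ z
  have hl : (∫⁻ w, (‖h1 w‖₊ : ℝ≥0∞) * (‖h2 (w - z)‖₊ : ℝ≥0∞) ∂μ)
      = eLpNorm (fun w => h1 w * h2 (w - z)) 1 μ := by
    rw [eLpNorm_one_eq_lintegral_enorm]
    refine lintegral_congr fun w => ?_
    rw [enorm_mul]; rfl
  rw [hl]
  haveI : ENNReal.HolderTriple p q 1 := ⟨by rw [inv_one]; simpa [one_div] using hpq⟩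
  have hH := eLpNorm_le_eLpNorm_mul_eLpNorm'_of_norm (μ := μ)
    (p := p) (q := q) (r := 1) h1m h2z (fun a b => a * b) 1
    (Filter.Eventually.of_forall fun w => by rw [norm_mul]; simp)
  rw [ENNReal.coe_one, one_mul] at hH
  refine hH.trans ?_
  have hshift : eLpNorm (h2 ∘ (fun w : G => w - z)) q μ = eLpNorm h2 q μ :=
    eLpNorm_comp_measurePreserving h2m hmp
  have : (fun w : G => h2 (w - z)) = h2 ∘ (fun w : G => w - z) := rfl
  rw [this, hshift]

set_option maxHeartbeats 2000000 in
theorem stmt5 {N : ℕ} (W : WeightFunction) (g : SchwartzMap (RN N) ℂ)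
    (hg : SOmega W ⇑g) (hg0 : ⇑g ≠ 0)
    (lam : ℝ) (hlam : 0 ≤ lam) (p q : ℝ≥0∞) (hp : 1 ≤ p) (hpq : 1 / p + 1 / q = 1)
    (f : SchwartzMap (RN N) ℂ) (hf : SOmega W ⇑f) :
    wnorm W lam MeasureTheory.volume (fun z : RN N × RN N => spec ⇑g ⇑f z.1 z.2) ⊤ ≤
      ENNReal.ofReal (((2 * Real.pi) ^ N)⁻¹ * Real.exp (W.K * (1 + 2 * W.K) * lam)) *
      wnorm W (2 * W.K ^ 2 * lam) MeasureTheory.volume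
        (fun z : RN N × RN N => rihaczek ⇑f z.1 z.2) p *
      wnorm W (2 * W.K ^ 2 * lam) MeasureTheory.volume
        (fun z : RN N × RN N => rihaczek ⇑g z.1 z.2) q := by
  classical
  set h1 : RN N × RN N → ℝ :=
    fun w => Real.exp (2 * W.K ^ 2 * lam * W.w ‖w‖) * ‖rihaczek ⇑f w.1 w.2‖ with hh1
  set h2 : RN N × RN N → ℝ :=
    fun w => Real.exp (2 * W.K ^ 2 * lam * W.w ‖w‖) * ‖rihaczek ⇑g w.1 w.2‖ with hh2
  have h1c : Continuous h1 :=
    (Real.continuous_exp.comp (continuous_const.mul (W.cont.comp continuous_norm))).mul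
      (continuous_norm.comp (rihaczek_continuous f))
  have h2c : Continuous h2 :=
    (Real.continuous_exp.comp (continuous_const.mul (W.cont.comp continuous_norm))).mul
      (continuous_norm.comp (rihaczek_continuous g))
  have hwf : wnorm W (2 * W.K ^ 2 * lam) MeasureTheory.volume
      (fun z : RN N × RN N => rihaczek ⇑f z.1 z.2) p = eLpNorm h1 p volume := rfl
  have hwg : wnorm W (2 * W.K ^ 2 * lam) MeasureTheory.volume
      (fun z : RN N × RN N => rihaczek ⇑g z.1 z.2) q = eLpNorm h2 q volume := rfl
  rw [hwf, hwg]
  have hP : (0:ℝ) < (2 * Real.pi) ^ N := by positivity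
  -- pointwise bound
  have hpoint : ∀ z : RN N × RN N,
      (‖Real.exp (lam * W.w ‖z‖) * ‖spec ⇑g ⇑f z.1 z.2‖‖₊ : ℝ≥0∞)
        ≤ ENNReal.ofReal (((2 * Real.pi) ^ N)⁻¹ * Real.exp (W.K * (1 + 2 * W.K) * lam)) *
          (eLpNorm h1 p volume * eLpNorm h2 q volume) := by
    intro z
    have hspec0 : (0:ℝ) ≤ spec ⇑g ⇑f z.1 z.2 := by
      rw [spec]; positivity
    have e0 : (‖Real.exp (lam * W.w ‖z‖) * ‖spec ⇑g ⇑f z.1 z.2‖‖₊ : ℝ≥0∞)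
        = ENNReal.ofReal (Real.exp (lam * W.w ‖z‖)) *
          ENNReal.ofReal (spec ⇑g ⇑f z.1 z.2) := by
      rw [← enorm_eq_nnnorm, Real.enorm_eq_ofReal (by positivity),
        ENNReal.ofReal_mul (Real.exp_nonneg _), Real.norm_of_nonneg hspec0]
    -- turn spec into the Rihaczek integral
    have e1 : ENNReal.ofReal (spec ⇑g ⇑f z.1 z.2)
        = ENNReal.ofReal (((2 * Real.pi) ^ N)⁻¹) *
          ENNReal.ofReal ((2 * Real.pi) ^ N * spec ⇑g ⇑f z.1 z.2) := by
      rw [← ENNReal.ofReal_mul (by positivity)]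
      congr 1
      field_simp
    have e2 : ENNReal.ofReal ((2 * Real.pi) ^ N * spec ⇑g ⇑f z.1 z.2)
        ≤ ∫⁻ w : RN N × RN N, (‖rihaczek ⇑f w.1 w.2‖₊ : ℝ≥0∞) *
            (‖rihaczek ⇑g (w.1 - z.1) (w.2 - z.2)‖₊ : ℝ≥0∞) ∂volume := by
      rw [magic f g z.1 z.2, ofReal_norm]
      refine (enorm_integral_le_lintegral_enorm _).trans ?_
      refine lintegral_mono fun w => ?_
      simp only [enorm_mul, RCLike.enorm_conj, enorm_eq_nnnorm, nnnorm_mul, ENNReal.coe_mul, RCLike.nnnorm_conj, le_refl]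
    -- weighted pointwise bound under the integral
    have e3 : ∀ w : RN N × RN N,
        ENNReal.ofReal (Real.exp (lam * W.w ‖z‖)) *
          ((‖rihaczek ⇑f w.1 w.2‖₊ : ℝ≥0∞) *
            (‖rihaczek ⇑g (w.1 - z.1) (w.2 - z.2)‖₊ : ℝ≥0∞))
        ≤ ENNReal.ofReal (Real.exp (W.K * (1 + 2 * W.K) * lam)) *
            ((‖h1 w‖₊ : ℝ≥0∞) * (‖h2 (w - z)‖₊ : ℝ≥0∞)) := by
      intro w
      have hco1 : (‖h1 w‖₊ : ℝ≥0∞)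
          = ENNReal.ofReal (Real.exp (2 * W.K ^ 2 * lam * W.w ‖w‖)) *
            (‖rihaczek ⇑f w.1 w.2‖₊ : ℝ≥0∞) := by
        rw [hh1, ← enorm_eq_nnnorm, Real.enorm_eq_ofReal (by positivity),
          ENNReal.ofReal_mul (Real.exp_nonneg _), ofReal_norm, enorm_eq_nnnorm]
      have hco2 : (‖h2 (w - z)‖₊ : ℝ≥0∞)
          = ENNReal.ofReal (Real.exp (2 * W.K ^ 2 * lam * W.w ‖w - z‖)) *
            (‖rihaczek ⇑g (w.1 - z.1) (w.2 - z.2)‖₊ : ℝ≥0∞) := by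
        rw [hh2, ← enorm_eq_nnnorm, Real.enorm_eq_ofReal (by positivity),
          ENNReal.ofReal_mul (Real.exp_nonneg _), ofReal_norm, enorm_eq_nnnorm]
        simp [Prod.fst_sub, Prod.snd_sub]
      rw [hco1, hco2]
      have hw : ENNReal.ofReal (Real.exp (lam * W.w ‖z‖))
          ≤ ENNReal.ofReal (Real.exp (W.K * (1 + 2 * W.K) * lam)) *
            (ENNReal.ofReal (Real.exp (2 * W.K ^ 2 * lam * W.w ‖w‖)) *
              ENNReal.ofReal (Real.exp (2 * W.K ^ 2 * lam * W.w ‖w - z‖))) := by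
        rw [← ENNReal.ofReal_mul (Real.exp_nonneg _), ← ENNReal.ofReal_mul (by positivity)]
        exact ENNReal.ofReal_le_ofReal (weight_key W hlam z w)
      calc ENNReal.ofReal (Real.exp (lam * W.w ‖z‖)) *
            ((‖rihaczek ⇑f w.1 w.2‖₊ : ℝ≥0∞) *
              (‖rihaczek ⇑g (w.1 - z.1) (w.2 - z.2)‖₊ : ℝ≥0∞))
          ≤ (ENNReal.ofReal (Real.exp (W.K * (1 + 2 * W.K) * lam)) *
              (ENNReal.ofReal (Real.exp (2 * W.K ^ 2 * lam * W.w ‖w‖)) *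
                ENNReal.ofReal (Real.exp (2 * W.K ^ 2 * lam * W.w ‖w - z‖)))) *
            ((‖rihaczek ⇑f w.1 w.2‖₊ : ℝ≥0∞) *
              (‖rihaczek ⇑g (w.1 - z.1) (w.2 - z.2)‖₊ : ℝ≥0∞)) :=
            mul_le_mul_left hw _
        _ = ENNReal.ofReal (Real.exp (W.K * (1 + 2 * W.K) * lam)) *
            (ENNReal.ofReal (Real.exp (2 * W.K ^ 2 * lam * W.w ‖w‖)) *
              (‖rihaczek ⇑f w.1 w.2‖₊ : ℝ≥0∞) *
            (ENNReal.ofReal (Real.exp (2 * W.K ^ 2 * lam * W.w ‖w - z‖)) *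
              (‖rihaczek ⇑g (w.1 - z.1) (w.2 - z.2)‖₊ : ℝ≥0∞))) := by ring
    -- Hölder
    haveI : (volume : Measure (RN N × RN N)).IsAddRightInvariant := by
      rw [MeasureTheory.Measure.volume_eq_prod]; infer_instance
    haveI : SFinite (volume : Measure (RN N × RN N)) := by
      rw [MeasureTheory.Measure.volume_eq_prod]; infer_instance
    have holder : (∫⁻ w : RN N × RN N, (‖h1 w‖₊ : ℝ≥0∞) * (‖h2 (w - z)‖₊ : ℝ≥0∞) ∂volume)
        ≤ eLpNorm h1 p volume * eLpNorm h2 q volume :=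
      holder_shift h1 h2 h1c.aestronglyMeasurable h2c.aestronglyMeasurable z p q hpq
        ((h2c.comp (continuous_id.sub continuous_const)).aestronglyMeasurable)
    -- assemble
    calc (‖Real.exp (lam * W.w ‖z‖) * ‖spec ⇑g ⇑f z.1 z.2‖‖₊ : ℝ≥0∞)
        = ENNReal.ofReal (((2 * Real.pi) ^ N)⁻¹) *
            (ENNReal.ofReal (Real.exp (lam * W.w ‖z‖)) *
              ENNReal.ofReal ((2 * Real.pi) ^ N * spec ⇑g ⇑f z.1 z.2)) := by
          rw [e0, e1]; ring
      _ ≤ ENNReal.ofReal (((2 * Real.pi) ^ N)⁻¹) *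
            (ENNReal.ofReal (Real.exp (lam * W.w ‖z‖)) *
              ∫⁻ w : RN N × RN N, (‖rihaczek ⇑f w.1 w.2‖₊ : ℝ≥0∞) *
                (‖rihaczek ⇑g (w.1 - z.1) (w.2 - z.2)‖₊ : ℝ≥0∞) ∂volume) := by
          gcongr
      _ = ENNReal.ofReal (((2 * Real.pi) ^ N)⁻¹) *
            ∫⁻ w : RN N × RN N, ENNReal.ofReal (Real.exp (lam * W.w ‖z‖)) *
              ((‖rihaczek ⇑f w.1 w.2‖₊ : ℝ≥0∞) *
                (‖rihaczek ⇑g (w.1 - z.1) (w.2 - z.2)‖₊ : ℝ≥0∞)) ∂volume := by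
          rw [lintegral_const_mul' _ _ ENNReal.ofReal_ne_top]
      _ ≤ ENNReal.ofReal (((2 * Real.pi) ^ N)⁻¹) *
            ∫⁻ w : RN N × RN N, ENNReal.ofReal (Real.exp (W.K * (1 + 2 * W.K) * lam)) *
              ((‖h1 w‖₊ : ℝ≥0∞) * (‖h2 (w - z)‖₊ : ℝ≥0∞)) ∂volume := by
          exact mul_le_mul_right (lintegral_mono fun w => e3 w) _
      _ = ENNReal.ofReal (((2 * Real.pi) ^ N)⁻¹) *
            (ENNReal.ofReal (Real.exp (W.K * (1 + 2 * W.K) * lam)) *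
              ∫⁻ w : RN N × RN N, (‖h1 w‖₊ : ℝ≥0∞) * (‖h2 (w - z)‖₊ : ℝ≥0∞) ∂volume) := by
          rw [lintegral_const_mul' _ _ ENNReal.ofReal_ne_top]
      _ ≤ ENNReal.ofReal (((2 * Real.pi) ^ N)⁻¹) *
            (ENNReal.ofReal (Real.exp (W.K * (1 + 2 * W.K) * lam)) *
              (eLpNorm h1 p volume * eLpNorm h2 q volume)) := by
          gcongr
      _ = ENNReal.ofReal (((2 * Real.pi) ^ N)⁻¹ * Real.exp (W.K * (1 + 2 * W.K) * lam)) *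
            (eLpNorm h1 p volume * eLpNorm h2 q volume) := by
          rw [ENNReal.ofReal_mul (by positivity)]
          ring
  -- conclude via essSup
  rw [wnorm, eLpNorm_exponent_top, eLpNormEssSup, mul_assoc]
  exact essSup_le_of_ae_le _ (Filter.Eventually.of_forall hpoint)
end

section
/- For τ ∈ (0,1) and f ∈ 𝒮(ℝᴺ), the τ-Wigner transform satisfies Wig_τ(f)(x,ξ) = τ^{−N} e^{i x·ξ/τ} V_{A_τ f} f(x/(1−τ), ξ/τ), where (A_τ h)(t) := h((τ−1)t/τ). -/
open MeasureTheory Complex ENNReal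

theorem stmt8 {N : ℕ} (τ : ℝ) (hτ : τ ∈ Set.Ioo (0 : ℝ) 1)
    (f : SchwartzMap (RN N) ℂ) (x ξ : RN N) :
    wig τ ⇑f x ξ = ((τ ^ N : ℝ) : ℂ)⁻¹ *
      Complex.exp (Complex.I * ((dotR x ξ / τ : ℝ) : ℂ)) *
      stft (fun t => f (((τ - 1) / τ) • t)) ⇑f ((1 - τ)⁻¹ • x) (τ⁻¹ • ξ) := by
  obtain ⟨hτ0, hτ1⟩ := hτ
  have hτ' : τ ≠ 0 := ne_of_gt hτ0
  have h1τ : (1 : ℝ) - τ ≠ 0 := by intro h; linarith [sub_eq_zero.mp h]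
  set F : RN N → ℂ := fun y => f y *
      (starRingEnd ℂ) (f (((τ - 1) / τ) • (y - (1 - τ)⁻¹ • x))) *
      Complex.exp (-(Complex.I * (dotR y (τ⁻¹ • ξ) : ℂ))) with hF
  have hstft : stft (fun t => f (((τ - 1) / τ) • t)) ⇑f ((1 - τ)⁻¹ • x) (τ⁻¹ • ξ)
      = ∫ y, F y := rfl
  have step1 : ∫ y, F y = ∫ y, F (x + y) :=
    (MeasureTheory.integral_add_left_eq_self F x).symm
  have step2 : ∫ y, F (x + τ • y) = ((τ ^ N : ℝ))⁻¹ • ∫ y, F (x + y) := by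
    have h := MeasureTheory.Measure.integral_comp_smul_of_nonneg (μ := volume) (fun y => F (x + y)) τ
      (hR := le_of_lt hτ0)
    simpa [Module.finrank_fin_fun] using h
  have key : ∀ t : RN N, F (x + τ • t) =
      Complex.exp (-(Complex.I * ((dotR x ξ / τ : ℝ) : ℂ))) *
      (Complex.exp (-(Complex.I * (dotR t ξ : ℂ))) * f (x + τ • t) *
        (starRingEnd ℂ) (f (x - (1 - τ) • t))) := by
    intro t
    have harg : ((τ - 1) / τ) • ((x + τ • t) - (1 - τ)⁻¹ • x) = x - (1 - τ) • t := by
      funext i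
      simp only [Pi.smul_apply, Pi.add_apply, Pi.sub_apply, smul_eq_mul]
      field_simp
      ring
    have hdot : (dotR (x + τ • t) (τ⁻¹ • ξ) : ℝ) = dotR x ξ / τ + dotR t ξ := by
      simp only [dotR, Pi.add_apply, Pi.smul_apply, smul_eq_mul, Finset.sum_div,
        ← Finset.sum_add_distrib]
      refine Finset.sum_congr rfl fun i _ => ?_
      field_simp
    rw [hF]
    simp only [harg, hdot]
    push_cast
    rw [mul_add, neg_add, Complex.exp_add]
    ring
  have hc : ((τ ^ N : ℝ) : ℂ) ≠ 0 := by
    exact_mod_cast pow_ne_zero N hτ'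
  have step2' : ∫ y, F (x + y) = (τ ^ N : ℝ) • ∫ y, F (x + τ • y) := by
    rw [step2, smul_smul, mul_inv_cancel₀ (pow_ne_zero N hτ'), one_smul]
  have hint : (∫ y, F (x + τ • y)) = Complex.exp (-(Complex.I * ((dotR x ξ / τ : ℝ) : ℂ))) *
      wig τ (⇑f) x ξ := by
    rw [wig, ← integral_const_mul]
    exact integral_congr_ae (Filter.Eventually.of_forall key)
  rw [hstft, step1, step2', hint, Complex.real_smul]
  rw [show ((τ ^ N : ℝ) : ℂ)⁻¹ * Complex.exp (Complex.I * ((dotR x ξ / τ : ℝ) : ℂ)) *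
      (((τ ^ N : ℝ) : ℂ) * (Complex.exp (-(Complex.I * ((dotR x ξ / τ : ℝ) : ℂ))) *
        wig τ (⇑f) x ξ)) =
      (((τ ^ N : ℝ) : ℂ)⁻¹ * ((τ ^ N : ℝ) : ℂ)) *
      ((Complex.exp (Complex.I * ((dotR x ξ / τ : ℝ) : ℂ)) *
        Complex.exp (-(Complex.I * ((dotR x ξ / τ : ℝ) : ℂ)))) * wig τ (⇑f) x ξ) from by ring,
    inv_mul_cancel₀ hc, ← Complex.exp_add, add_neg_cancel, Complex.exp_zero, one_mul, one_mul]
end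

section
/- (Price local uncertainty principle) Let α > N/2 and E ⊂ ℝᴺ measurable. There is a constant K′ = K′(N,α) such that for every nonzero f ∈ L²(ℝᴺ) and t̄ ∈ ℝᴺ: ∫_E |f̂(ξ)|² dξ ≤ K′ m(E) ‖f‖₂^{2−N/α} ‖|t−t̄|^α f‖₂^{N/α}, with the Fourier transform normalized as f̂(ξ) = ∫ e^{−ix·ξ} f(x) dx and Plancherel ‖f̂‖₂² = (2π)^N ‖f‖₂² absorbed into K′. -/
open MeasureTheory Complex ENNReal

open MeasureTheory Set Metric in
private noncomputable def stmt16I1 (N : ℕ) (α : ℝ) : ℝ≥0∞ :=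
  ∫⁻ y in (Metric.closedBall (0 : RN N) 1)ᶜ, ENNReal.ofReal (‖y‖ ^ (-(2 * α)))

private lemma stmt16_norm_exp (c : ℝ) : ‖Complex.exp (-(Complex.I * (c : ℂ)))‖ = 1 := by
  rw [Complex.norm_exp]
  simp [Complex.mul_re]

open MeasureTheory Set Metric in
private lemma stmt16_meas {N : ℕ} (c : ℝ) (t0 : RN N) :
    Measurable fun x : RN N => ENNReal.ofReal (‖x - t0‖ ^ c) :=
  (((measurable_id.sub measurable_const).norm).pow measurable_const).ennreal_ofReal

open MeasureTheory Set Metric in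
private lemma stmt16_I1_lt_top {N : ℕ} (hN : 0 < N) {α : ℝ} (hα : (N : ℝ) / 2 < α) :
    stmt16I1 N α < ⊤ := by
  have hN0 : (0:ℝ) ≤ (N:ℝ)/2 := by positivity
  have h2α : (0:ℝ) < 2 * α := by linarith
  have hrank : ((Module.finrank ℝ (RN N)) : ℝ) < 2 * α := by
    rw [Module.finrank_fin_fun]; linarith
  have hfin := finite_integral_one_add_norm (E := RN N) (μ := volume) hrank
  have hb : ∀ y : RN N, y ∈ (Metric.closedBall (0 : RN N) 1)ᶜ →
      ENNReal.ofReal (‖y‖ ^ (-(2*α))) ≤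
        ENNReal.ofReal ((2:ℝ) ^ (2*α)) * ENNReal.ofReal ((1 + ‖y‖) ^ (-(2*α))) := by
    intro y hy
    have h1 : 1 < ‖y‖ := by
      simpa [Metric.mem_closedBall, dist_zero_right] using hy
    have hy0 : (0:ℝ) < ‖y‖ := lt_trans one_pos h1
    rw [← ENNReal.ofReal_mul (by positivity)]
    apply ENNReal.ofReal_le_ofReal
    have p1 : (0:ℝ) < ‖y‖ ^ (2*α) := Real.rpow_pos_of_pos hy0 _
    have p2 : (0:ℝ) < (1 + ‖y‖) ^ (2*α) := Real.rpow_pos_of_pos (by linarith) _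
    have key : (1 + ‖y‖) ^ (2*α) ≤ (2:ℝ) ^ (2*α) * ‖y‖ ^ (2*α) := by
      rw [← Real.mul_rpow (by norm_num) hy0.le]
      exact Real.rpow_le_rpow (by positivity) (by linarith) h2α.le
    rw [Real.rpow_neg hy0.le, Real.rpow_neg (by positivity)]
    rw [← div_eq_mul_inv, le_div_iff₀ p2, inv_mul_eq_div, div_le_iff₀ p1]
    linarith [key]
  calc stmt16I1 N α
      ≤ ∫⁻ y in (Metric.closedBall (0 : RN N) 1)ᶜ,
          ENNReal.ofReal ((2:ℝ) ^ (2*α)) * ENNReal.ofReal ((1 + ‖y‖) ^ (-(2*α))) :=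
        setLIntegral_mono' measurableSet_closedBall.compl hb
    _ ≤ ∫⁻ y, ENNReal.ofReal ((2:ℝ) ^ (2*α)) * ENNReal.ofReal ((1 + ‖y‖) ^ (-(2*α))) ∂volume :=
        setLIntegral_le_lintegral _ _
    _ = ENNReal.ofReal ((2:ℝ) ^ (2*α)) * ∫⁻ y, ENNReal.ofReal ((1 + ‖y‖) ^ (-(2*α))) ∂volume :=
        lintegral_const_mul _ (((measurable_const.add measurable_norm).pow
          measurable_const).ennreal_ofReal)
    _ < ⊤ := ENNReal.mul_lt_top ENNReal.ofReal_lt_top hfin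

open MeasureTheory Set Metric in
private lemma stmt16_scaling {N : ℕ} {α : ℝ} {r : ℝ} (hr : 0 < r) :
    (∫⁻ y in (Metric.closedBall (0 : RN N) r)ᶜ, ENNReal.ofReal (‖y‖ ^ (-(2 * α)))) =
      ENNReal.ofReal (r ^ ((N : ℝ) - 2 * α)) * stmt16I1 N α := by
  set G : RN N → ℝ≥0∞ := fun y => ENNReal.ofReal (‖y‖ ^ (-(2*α))) with hG
  have hGmeas : Measurable G := (measurable_norm.pow measurable_const).ennreal_ofReal
  set H : RN N → ℝ≥0∞ := ((Metric.closedBall (0 : RN N) r)ᶜ).indicator G with hH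
  have hHmeas : Measurable H := hGmeas.indicator measurableSet_closedBall.compl
  have hrn : (0:ℝ) < r ^ Module.finrank ℝ (RN N) := by positivity
  have hmap : Measure.map (fun x : RN N => r • x) volume =
      ENNReal.ofReal |((r ^ Module.finrank ℝ (RN N)))⁻¹| • volume :=
    Measure.map_addHaar_smul volume hr.ne'
  have hsub : ∫⁻ x, H (r • x) ∂volume =
      ENNReal.ofReal ((r ^ Module.finrank ℝ (RN N))⁻¹) * ∫⁻ y, H y ∂volume := by
    rw [← lintegral_map hHmeas (measurable_const_smul r), hmap, lintegral_smul_measure,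
      abs_of_pos (by positivity), smul_eq_mul]
  have hpt : ∀ x : RN N, H (r • x) =
      ENNReal.ofReal (r ^ (-(2*α))) * ((Metric.closedBall (0 : RN N) 1)ᶜ).indicator G x := by
    intro x
    rw [hH]
    have hnorm : ‖r • x‖ = r * ‖x‖ := by
      rw [norm_smul, Real.norm_eq_abs, abs_of_pos hr]
    have hmem : (r • x ∈ (Metric.closedBall (0 : RN N) r)ᶜ) ↔
        (x ∈ (Metric.closedBall (0 : RN N) 1)ᶜ) := by
      simp only [Set.mem_compl_iff, Metric.mem_closedBall, dist_zero_right, hnorm, not_le]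
      rw [lt_mul_iff_one_lt_right hr]
    by_cases hx : x ∈ (Metric.closedBall (0 : RN N) 1)ᶜ
    · rw [Set.indicator_of_mem (hmem.2 hx), Set.indicator_of_mem hx, hG]
      simp only
      rw [hnorm, Real.mul_rpow hr.le (norm_nonneg x), ENNReal.ofReal_mul
        (Real.rpow_nonneg hr.le _)]
    · rw [Set.indicator_of_notMem (fun h => hx (hmem.1 h)), Set.indicator_of_notMem hx,
        mul_zero]
  have h1 : ∫⁻ x, H (r • x) ∂volume = ENNReal.ofReal (r ^ (-(2*α))) * stmt16I1 N α := by
    simp_rw [hpt]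
    rw [lintegral_const_mul _ (hGmeas.indicator measurableSet_closedBall.compl),
      lintegral_indicator measurableSet_closedBall.compl]
    rfl
  have h2 : ∫⁻ y, H y ∂volume =
      ∫⁻ y in (Metric.closedBall (0 : RN N) r)ᶜ, ENNReal.ofReal (‖y‖ ^ (-(2*α))) := by
    rw [hH, lintegral_indicator measurableSet_closedBall.compl]
  have hcancel : ENNReal.ofReal (r ^ Module.finrank ℝ (RN N)) *
      ENNReal.ofReal ((r ^ Module.finrank ℝ (RN N))⁻¹) = 1 := by
    rw [← ENNReal.ofReal_mul hrn.le, mul_inv_cancel₀ hrn.ne', ENNReal.ofReal_one]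
  have hmain : (∫⁻ y in (Metric.closedBall (0 : RN N) r)ᶜ, ENNReal.ofReal (‖y‖ ^ (-(2*α)))) =
      ENNReal.ofReal (r ^ Module.finrank ℝ (RN N)) * ENNReal.ofReal (r ^ (-(2*α))) *
        stmt16I1 N α := by
    rw [← h2]
    calc ∫⁻ y, H y ∂volume = 1 * ∫⁻ y, H y ∂volume := (one_mul _).symm
      _ = ENNReal.ofReal (r ^ Module.finrank ℝ (RN N)) *
          (ENNReal.ofReal ((r ^ Module.finrank ℝ (RN N))⁻¹) * ∫⁻ y, H y ∂volume) := by
          rw [← hcancel]; ring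
      _ = ENNReal.ofReal (r ^ Module.finrank ℝ (RN N)) * ENNReal.ofReal (r ^ (-(2*α))) *
          stmt16I1 N α := by rw [← hsub, h1]; ring
  rw [hmain]
  congr 1
  rw [← ENNReal.ofReal_mul hrn.le]
  congr 1
  rw [Module.finrank_fin_fun, ← Real.rpow_natCast r N, ← Real.rpow_add hr, ← sub_eq_add_neg]

open MeasureTheory Set Metric in
private lemma stmt16_translate {N : ℕ} {α r : ℝ} (t0 : RN N) :
    (∫⁻ x in (Metric.closedBall t0 r)ᶜ, ENNReal.ofReal (‖x - t0‖ ^ (-(2*α))) ∂volume)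
      = ∫⁻ y in (Metric.closedBall (0 : RN N) r)ᶜ, ENNReal.ofReal (‖y‖ ^ (-(2*α))) ∂volume := by
  set G : RN N → ℝ≥0∞ := fun y => ENNReal.ofReal (‖y‖ ^ (-(2*α))) with hG
  rw [← lintegral_indicator measurableSet_closedBall.compl,
    ← lintegral_indicator measurableSet_closedBall.compl]
  have key : ∀ x : RN N,
      ((Metric.closedBall t0 r)ᶜ).indicator (fun x => G (x - t0)) x
        = ((Metric.closedBall (0 : RN N) r)ᶜ).indicator G (x - t0) := by
    intro x
    have hmem : x ∈ (Metric.closedBall t0 r)ᶜ ↔ x - t0 ∈ (Metric.closedBall (0:RN N) r)ᶜ := by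
      simp [Metric.mem_closedBall, dist_zero_right, dist_eq_norm]
    by_cases hx : x ∈ (Metric.closedBall t0 r)ᶜ
    · rw [Set.indicator_of_mem hx, Set.indicator_of_mem (hmem.1 hx)]
    · rw [Set.indicator_of_notMem hx, Set.indicator_of_notMem (fun h => hx (hmem.2 h))]
  refine (lintegral_congr fun x => key x).trans ?_
  exact lintegral_sub_right_eq_self (((Metric.closedBall (0:RN N) r)ᶜ).indicator G) t0


theorem stmt16 {N : ℕ} (hN : 0 < N) (α : ℝ) (hα : (N : ℝ) / 2 < α) :
    ∃ K' : ℝ, 0 < K' ∧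
      ∀ (E : Set (RN N)), MeasurableSet E →
      ∀ f : RN N → ℂ, MeasureTheory.MemLp f 2 MeasureTheory.volume → f ≠ 0 →
      ∀ t0 : RN N,
        (∫⁻ ξ in E, ENNReal.ofReal (‖ftr f ξ‖ ^ 2)) ≤
          ENNReal.ofReal K' * MeasureTheory.volume E *
          (MeasureTheory.eLpNorm f 2 MeasureTheory.volume) ^ (2 - (N : ℝ) / α) *
          (MeasureTheory.eLpNorm (fun t : RN N => ‖t - t0‖ ^ α * ‖f t‖) 2
            MeasureTheory.volume) ^ ((N : ℝ) / α) := by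
  classical
  have hNpos : (0:ℝ) < (N:ℝ) := Nat.cast_pos.2 hN
  have hα0 : 0 < α := lt_of_le_of_lt (by positivity) hα
  have hαne : α ≠ 0 := ne_of_gt hα0
  set V : ℝ≥0∞ := MeasureTheory.volume (Metric.ball (0 : RN N) 1) with hV
  set I1 : ℝ≥0∞ := stmt16I1 N α with hI1
  have hVlt : V < ⊤ := measure_ball_lt_top
  have hI1lt : I1 < ⊤ := stmt16_I1_lt_top hN hα
  set C : ℝ≥0∞ := V ^ ((1:ℝ)/2) + I1 ^ ((1:ℝ)/2) with hC
  have hClt : C < ⊤ := by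
    rw [hC]
    exact ENNReal.add_lt_top.2 ⟨ENNReal.rpow_lt_top_of_nonneg (by norm_num) hVlt.ne,
      ENNReal.rpow_lt_top_of_nonneg (by norm_num) hI1lt.ne⟩
  have hC2lt : C ^ (2:ℕ) < ⊤ := by
    rw [pow_two]; exact ENNReal.mul_lt_top hClt hClt
  have hK'pos : (0:ℝ) < (C ^ (2:ℕ)).toReal + 1 :=
    add_pos_of_nonneg_of_pos ENNReal.toReal_nonneg one_pos
  refine ⟨(C ^ (2:ℕ)).toReal + 1, hK'pos, ?_⟩
  have hKle : C ^ (2:ℕ) ≤ ENNReal.ofReal ((C ^ (2:ℕ)).toReal + 1) := by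
    calc C ^ (2:ℕ) = ENNReal.ofReal ((C ^ (2:ℕ)).toReal) := (ENNReal.ofReal_toReal hC2lt.ne).symm
      _ ≤ _ := ENNReal.ofReal_le_ofReal (by linarith)
  intro E hE f hf hf0 t0
  set μ := (MeasureTheory.volume : MeasureTheory.Measure (RN N)) with hμ
  have hfm := hf.1
  by_cases hE0 : μ E = 0
  · rw [MeasureTheory.setLIntegral_measure_zero _ _ hE0]; exact zero_le
  by_cases hfae : f =ᵐ[μ] 0
  · have hz : ∀ ξ : RN N, ftr f ξ = 0 := by
      intro ξ
      apply MeasureTheory.integral_eq_zero_of_ae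
      filter_upwards [hfae] with x hx
      simp [hx]
    have h0 : (∫⁻ ξ in E, ENNReal.ofReal (‖ftr f ξ‖ ^ 2)) = 0 := by simp [hz]
    rw [h0]; exact zero_le
  set A := MeasureTheory.eLpNorm f 2 μ with hA
  set gw : RN N → ℝ := fun t => ‖t - t0‖ ^ α * ‖f t‖ with hgw
  set B := MeasureTheory.eLpNorm gw 2 μ with hB
  have hgwmeas : MeasureTheory.AEStronglyMeasurable gw μ :=
    ((((measurable_id.sub measurable_const).norm).pow measurable_const).aemeasurable.mul
      hfm.norm.aemeasurable).aestronglyMeasurable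
  have hAne0 : A ≠ 0 := fun h => hfae ((MeasureTheory.eLpNorm_eq_zero_iff hfm two_ne_zero).1 h)
  have hAnetop : A ≠ ⊤ := hf.2.ne
  have hsingle : μ {t0} = 0 := by
    have hset : ({t0} : Set (RN N)) = Set.pi Set.univ (fun i => {t0 i}) := by
      ext x; simp [Set.mem_pi, funext_iff]
    rw [hμ, hset, MeasureTheory.volume_pi_pi]
    exact Finset.prod_eq_zero (Finset.mem_univ ⟨0, hN⟩) (measure_singleton _)
  have hBne0 : B ≠ 0 := by
    intro h
    have hg0 : gw =ᵐ[μ] 0 := (MeasureTheory.eLpNorm_eq_zero_iff hgwmeas two_ne_zero).1 h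
    have hne : ∀ᵐ x ∂μ, x ≠ t0 := by
      rw [MeasureTheory.ae_iff]
      convert hsingle using 2
      ext x; simp
    apply hfae
    filter_upwards [hg0, hne] with x hx hxne
    have h1 : (0:ℝ) < ‖x - t0‖ := by
      rw [norm_pos_iff, sub_ne_zero]; exact hxne
    have h2 : (0:ℝ) < ‖x - t0‖ ^ α := Real.rpow_pos_of_pos h1 _
    have h3 : ‖x - t0‖ ^ α * ‖f x‖ = 0 := hx
    have h4 : ‖f x‖ = 0 := by
      rcases mul_eq_zero.1 h3 with h | h
      · exact absurd h h2.ne'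
      · exact h
    simpa using h4
  by_cases hBtop : B = ⊤
  · rw [hBtop]
    have h1 : (⊤:ℝ≥0∞) ^ ((N:ℝ)/α) = ⊤ := ENNReal.top_rpow_of_pos (div_pos hNpos hα0)
    rw [h1, ENNReal.mul_top (by
      refine mul_ne_zero (mul_ne_zero ?_ hE0) ?_
      · exact (ENNReal.ofReal_pos.2 hK'pos).ne'
      · exact (ENNReal.rpow_pos (lt_of_le_of_ne (zero_le) (Ne.symm hAne0)) hAnetop).ne')]
    exact le_top
  by_cases hint : MeasureTheory.Integrable f μ
  swap
  · have hz : ∀ ξ : RN N, ftr f ξ = 0 := by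
      intro ξ
      apply MeasureTheory.integral_undef
      intro hcon
      rw [← hμ] at hcon
      refine hint (MeasureTheory.Integrable.mono' hcon.norm hfm ?_)
      filter_upwards with x
      rw [norm_mul, stmt16_norm_exp, one_mul]
    have h0 : (∫⁻ ξ in E, ENNReal.ofReal (‖ftr f ξ‖ ^ 2)) = 0 := by simp [hz]
    rw [h0]; exact zero_le
  -- main case
  set a := A.toReal with ha_def
  set b := B.toReal with hb_def
  have ha : 0 < a := ENNReal.toReal_pos hAne0 hAnetop
  have hb : 0 < b := ENNReal.toReal_pos hBne0 hBtop
  have hAa : A = ENNReal.ofReal a := (ENNReal.ofReal_toReal hAnetop).symm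
  have hBb : B = ENNReal.ofReal b := (ENNReal.ofReal_toReal hBtop).symm
  have hba : (0:ℝ) < b / a := div_pos hb ha
  set r : ℝ := (b / a) ^ (α⁻¹) with hr_def
  have hr : 0 < r := Real.rpow_pos_of_pos hba _
  set th : ℝ := α⁻¹ * (N:ℝ) * ((1:ℝ)/2) with hth
  set D : ℝ := b ^ th * a ^ (1 - th) with hD
  have hD0 : 0 < D := by rw [hD]; positivity
  have hkey : ∀ s : ℝ, (b/a) ^ s = b ^ s * a ^ (-s) := fun s => by
    rw [Real.div_rpow hb.le ha.le, Real.rpow_neg ha.le, div_eq_mul_inv]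
  have hre1 : ((r ^ N : ℝ)) ^ ((1:ℝ)/2) * a = D := by
    rw [← Real.rpow_natCast r N, hr_def, ← Real.rpow_mul hba.le, ← Real.rpow_mul hba.le]
    rw [hkey th, hD]
    have h3 : a ^ (-th) * a = a ^ (1 - th) := by
      rw [← Real.rpow_add_one ha.ne' (-th)]
      congr 1; ring
    rw [mul_assoc, h3]
  have hre2 : (r ^ ((N:ℝ) - 2*α)) ^ ((1:ℝ)/2) * b = D := by
    rw [hr_def, ← Real.rpow_mul hba.le, ← Real.rpow_mul hba.le]
    have he : α⁻¹ * ((N:ℝ) - 2*α) * ((1:ℝ)/2) = th - 1 := by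
      rw [hth]; linear_combination (-(1:ℝ)) * inv_mul_cancel₀ hαne
    rw [he, hkey (th - 1)]
    have h3 : b ^ (th - 1) * b = b ^ th := by
      rw [← Real.rpow_add_one hb.ne' (th-1)]; congr 1; ring
    have h4 : a ^ (-(th-1)) = a ^ (1 - th) := by congr 1; ring
    rw [h4, mul_right_comm, h3, hD]
  set M : ℝ := ∫ x, ‖f x‖ ∂μ with hM
  have hM0 : 0 ≤ M := MeasureTheory.integral_nonneg fun x => norm_nonneg _
  have hftr : ∀ ξ : RN N, ‖ftr f ξ‖ ≤ M := by
    intro ξ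
    refine le_trans (MeasureTheory.norm_integral_le_integral_norm _) (le_of_eq ?_)
    rw [hM]
    congr 1
    funext x
    rw [norm_mul, stmt16_norm_exp, one_mul]
  have hLHS : (∫⁻ ξ in E, ENNReal.ofReal (‖ftr f ξ‖ ^ 2)) ≤ ENNReal.ofReal (M ^ 2) * μ E := by
    calc (∫⁻ ξ in E, ENNReal.ofReal (‖ftr f ξ‖ ^ 2))
        ≤ ∫⁻ _ in E, ENNReal.ofReal (M ^ 2) ∂μ :=
          MeasureTheory.lintegral_mono fun ξ => ENNReal.ofReal_le_ofReal
            (pow_le_pow_left₀ (norm_nonneg _) (hftr ξ) 2)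
      _ = ENNReal.ofReal (M ^ 2) * μ E := MeasureTheory.setLIntegral_const E _
  set J : ℝ≥0∞ := ∫⁻ x, (‖f x‖₊ : ℝ≥0∞) ∂μ with hJ
  have hMJ : ENNReal.ofReal M = J := by
    rw [hM, MeasureTheory.ofReal_integral_eq_lintegral_ofReal hint.norm
      (Filter.Eventually.of_forall fun x => norm_nonneg _), hJ]
    congr 1
    funext x
    rw [ofReal_norm]; rfl
  have hA2 : (∫⁻ x, (‖f x‖₊ : ℝ≥0∞) ^ (2:ℝ) ∂μ) = A ^ (2:ℝ) := by
    rw [hA, MeasureTheory.eLpNorm_eq_lintegral_rpow_enorm_toReal two_ne_zero ENNReal.ofNat_ne_top,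
      (by simp : ((2:ℝ≥0∞)).toReal = (2:ℝ)), ← ENNReal.rpow_mul]
    norm_num
    rfl
  have hgw_nn : ∀ x, 0 ≤ gw x := by
    intro x; rw [hgw]; positivity
  have hB2 : (∫⁻ x, (ENNReal.ofReal (gw x)) ^ (2:ℝ) ∂μ) = B ^ (2:ℝ) := by
    have hpt : ∀ x, ENNReal.ofReal (gw x) = ((‖gw x‖₊ : ℝ≥0∞)) := fun x =>
      (Real.enorm_eq_ofReal (hgw_nn x)).symm
    simp_rw [hpt]
    rw [hB, MeasureTheory.eLpNorm_eq_lintegral_rpow_enorm_toReal two_ne_zero ENNReal.ofNat_ne_top,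
      (by simp : ((2:ℝ≥0∞)).toReal = (2:ℝ)), ← ENNReal.rpow_mul]
    norm_num
    rfl
  have hconj : Real.HolderConjugate 2 2 := Real.HolderConjugate.two_two
  have hfnn : AEMeasurable (fun x => (‖f x‖₊ : ℝ≥0∞)) μ := hfm.enorm
  have hball : (∫⁻ x in Metric.closedBall t0 r, (‖f x‖₊ : ℝ≥0∞) ∂μ) ≤
      A * (μ (Metric.closedBall t0 r)) ^ ((1:ℝ)/2) := by
    have h := ENNReal.lintegral_mul_le_Lp_mul_Lq (μ.restrict (Metric.closedBall t0 r)) hconj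
      (f := fun x => ((‖f x‖₊ : ℝ≥0∞))) (g := fun _ => (1:ℝ≥0∞))
      hfnn.restrict aemeasurable_const
    simp only [Pi.mul_apply, mul_one, ENNReal.one_rpow] at h
    rw [MeasureTheory.setLIntegral_one] at h
    have hAle : (∫⁻ x in Metric.closedBall t0 r, (‖f x‖₊:ℝ≥0∞) ^ (2:ℝ) ∂μ) ^ ((1:ℝ)/2) ≤ A := by
      have hle : (∫⁻ x in Metric.closedBall t0 r, (‖f x‖₊:ℝ≥0∞) ^ (2:ℝ) ∂μ) ≤ A ^ (2:ℝ) := by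
        rw [← hA2]; exact MeasureTheory.setLIntegral_le_lintegral _ _
      calc (∫⁻ x in Metric.closedBall t0 r, (‖f x‖₊:ℝ≥0∞) ^ (2:ℝ) ∂μ) ^ ((1:ℝ)/2)
          ≤ (A ^ (2:ℝ)) ^ ((1:ℝ)/2) := ENNReal.rpow_le_rpow hle (by norm_num)
        _ = A := by rw [← ENNReal.rpow_mul]; norm_num
    exact le_trans h (mul_le_mul_left hAle _)
  set u : RN N → ℝ≥0∞ := fun x => ENNReal.ofReal (‖x - t0‖ ^ (-α)) with hu
  set v : RN N → ℝ≥0∞ := fun x => ENNReal.ofReal (gw x) with hv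
  have humeas : Measurable u := stmt16_meas (-α) t0
  have hvmeas : AEMeasurable v μ := hgwmeas.aemeasurable.ennreal_ofReal
  have hcompl : (∫⁻ x in (Metric.closedBall t0 r)ᶜ, (‖f x‖₊ : ℝ≥0∞) ∂μ) ≤
      (ENNReal.ofReal (r ^ ((N:ℝ) - 2*α)) * I1) ^ ((1:ℝ)/2) * B := by
    have hpted : ∀ x ∈ (Metric.closedBall t0 r)ᶜ, ((‖f x‖₊ : ℝ≥0∞)) = (u * v) x := by
      intro x hx
      have hxr : r < ‖x - t0‖ := by
        simpa [Metric.mem_closedBall, dist_eq_norm, not_le] using hx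
      have hx0 : (0:ℝ) < ‖x - t0‖ := lt_trans hr hxr
      simp only [Pi.mul_apply, hu, hv, hgw]
      rw [← ENNReal.ofReal_mul (Real.rpow_nonneg (norm_nonneg _) _)]
      rw [← mul_assoc, ← Real.rpow_add hx0, neg_add_cancel, Real.rpow_zero, one_mul,
        ofReal_norm]; rfl
    rw [MeasureTheory.setLIntegral_congr_fun measurableSet_closedBall.compl
      hpted]
    have h := ENNReal.lintegral_mul_le_Lp_mul_Lq (μ.restrict (Metric.closedBall t0 r)ᶜ) hconj
      humeas.aemeasurable hvmeas.restrict
    refine le_trans h ?_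
    have hfac1 : (∫⁻ x in (Metric.closedBall t0 r)ᶜ, u x ^ (2:ℝ) ∂μ) =
        ENNReal.ofReal (r ^ ((N:ℝ) - 2*α)) * I1 := by
      have hupt : ∀ x : RN N, u x ^ (2:ℝ) = ENNReal.ofReal (‖x - t0‖ ^ (-(2*α))) := by
        intro x
        rw [hu]
        simp only
        rw [ENNReal.ofReal_rpow_of_nonneg (Real.rpow_nonneg (norm_nonneg _) _) (by norm_num),
          ← Real.rpow_mul (norm_nonneg _)]
        ring_nf
      simp_rw [hupt]
      rw [stmt16_translate t0, stmt16_scaling hr, hI1]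
    have hfac2 : (∫⁻ x in (Metric.closedBall t0 r)ᶜ, v x ^ (2:ℝ) ∂μ) ^ ((1:ℝ)/2) ≤ B := by
      have hle : (∫⁻ x in (Metric.closedBall t0 r)ᶜ, v x ^ (2:ℝ) ∂μ) ≤ B ^ (2:ℝ) := by
        rw [← hB2]; exact MeasureTheory.setLIntegral_le_lintegral _ _
      calc (∫⁻ x in (Metric.closedBall t0 r)ᶜ, v x ^ (2:ℝ) ∂μ) ^ ((1:ℝ)/2)
          ≤ (B ^ (2:ℝ)) ^ ((1:ℝ)/2) := ENNReal.rpow_le_rpow hle (by norm_num)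
        _ = B := by rw [← ENNReal.rpow_mul]; norm_num
    rw [hfac1]
    exact mul_le_mul_right hfac2 _
  have hterm1 : A * (μ (Metric.closedBall t0 r)) ^ ((1:ℝ)/2) =
      ENNReal.ofReal D * V ^ ((1:ℝ)/2) := by
    rw [hμ, MeasureTheory.Measure.addHaar_closedBall MeasureTheory.volume t0 hr.le,
      Module.finrank_fin_fun,
      ENNReal.mul_rpow_of_nonneg _ _ (by norm_num : (0:ℝ) ≤ 1/2),
      ENNReal.ofReal_rpow_of_nonneg (by positivity) (by norm_num),
      hAa, ← mul_assoc, ← ENNReal.ofReal_mul ha.le, ← hV]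
    rw [mul_comm a ((r ^ N) ^ ((1:ℝ)/2)), hre1]
  have hterm2 : (ENNReal.ofReal (r ^ ((N:ℝ) - 2*α)) * I1) ^ ((1:ℝ)/2) * B =
      ENNReal.ofReal D * I1 ^ ((1:ℝ)/2) := by
    rw [ENNReal.mul_rpow_of_nonneg _ _ (by norm_num : (0:ℝ) ≤ 1/2),
      ENNReal.ofReal_rpow_of_nonneg (Real.rpow_nonneg hr.le _) (by norm_num), hBb,
      mul_right_comm, ← ENNReal.ofReal_mul (Real.rpow_nonneg (Real.rpow_nonneg hr.le _) _)]
    rw [hre2]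
  have hJle : J ≤ ENNReal.ofReal D * C := by
    calc J = (∫⁻ x in Metric.closedBall t0 r, (‖f x‖₊:ℝ≥0∞) ∂μ) +
        ∫⁻ x in (Metric.closedBall t0 r)ᶜ, (‖f x‖₊:ℝ≥0∞) ∂μ :=
          (MeasureTheory.lintegral_add_compl _ measurableSet_closedBall).symm
      _ ≤ A * (μ (Metric.closedBall t0 r)) ^ ((1:ℝ)/2) +
          (ENNReal.ofReal (r ^ ((N:ℝ)-2*α)) * I1) ^ ((1:ℝ)/2) * B := add_le_add hball hcompl
      _ = ENNReal.ofReal D * V ^ ((1:ℝ)/2) + ENNReal.ofReal D * I1 ^ ((1:ℝ)/2) := by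
          rw [hterm1, hterm2]
      _ = ENNReal.ofReal D * C := by rw [hC, mul_add]
  have hchain : ENNReal.ofReal M ≤ ENNReal.ofReal D * C := by
    rw [hMJ]; exact hJle
  have hD2 : ENNReal.ofReal (D ^ 2) = B ^ ((N:ℝ)/α) * A ^ (2 - (N:ℝ)/α) := by
    have hrealD : D ^ 2 = b ^ ((N:ℝ)/α) * a ^ (2 - (N:ℝ)/α) := by
      rw [hD, mul_pow, ← Real.rpow_natCast (b ^ th) 2, ← Real.rpow_natCast (a ^ (1-th)) 2,
        ← Real.rpow_mul hb.le, ← Real.rpow_mul ha.le]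
      have e1 : th * ((2:ℕ):ℝ) = (N:ℝ)/α := by
        rw [hth, div_eq_mul_inv]; push_cast; ring
      have e2 : (1 - th) * ((2:ℕ):ℝ) = 2 - (N:ℝ)/α := by
        rw [hth, div_eq_mul_inv]; push_cast; ring
      rw [e1, e2]
    rw [hrealD, ENNReal.ofReal_mul (Real.rpow_nonneg hb.le _), hAa, hBb,
      ENNReal.ofReal_rpow_of_pos ha, ENNReal.ofReal_rpow_of_pos hb]
  calc (∫⁻ ξ in E, ENNReal.ofReal (‖ftr f ξ‖ ^ 2))
      ≤ ENNReal.ofReal (M ^ 2) * μ E := hLHS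
    _ ≤ (ENNReal.ofReal D * C) ^ (2:ℕ) * μ E := by
        refine mul_le_mul_left ?_ _
        rw [ENNReal.ofReal_pow hM0, pow_two, pow_two]
        exact mul_le_mul' hchain hchain
    _ = ENNReal.ofReal (D ^ 2) * C ^ (2:ℕ) * μ E := by
        rw [mul_pow, ENNReal.ofReal_pow hD0.le]
    _ ≤ ENNReal.ofReal (D ^ 2) * ENNReal.ofReal ((C ^ (2:ℕ)).toReal + 1) * μ E :=
        mul_le_mul_left (mul_le_mul_right hKle _) _
    _ = ENNReal.ofReal ((C ^ (2:ℕ)).toReal + 1) * μ E *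
          A ^ (2 - (N:ℝ)/α) * B ^ ((N:ℝ)/α) := by
        rw [hD2]; ring
end
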